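/- Global existence in time: let M > 0 and let φ : ℝ → ℝ be locally Lipschitz with φ(0) = 0, φ(y) ≥ 0 for all y ∈ [0,M], and φ(M) ≥ φ(y) for all y ∈ [0,M]. Let N ≥ 1 and let u₀ : {0,…,N} → ℝ satisfy 0 ≤ (u₀)_i ≤ M for all i. Then there exists a unique differentiable u : [0,∞) → ℝ^{N+1} with u(0) = u₀ and u'(t) = Δ_N(φ∘u(t)) for all t ≥ 0. -/

import Mathlib

/-- The discrete Neumann Laplacian on `{0,…,N}` with mesh `ε = 1/N`:
`(Δ_N w)_i = (w_{i+1} − 2w_i + w_{i−1})/ε²` for `0 < i < N`,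
`(Δ_N w)_0 = (w_1 − w_0)/ε²`, `(Δ_N w)_N = (w_{N−1} − w_N)/ε²`. -/
noncomputable def lapN (N : ℕ) (w : Fin (N + 1) → ℝ) (i : Fin (N + 1)) : ℝ :=
  if i.val = 0 then
    (N : ℝ) ^ 2 * (w ⟨min 1 N, by omega⟩ - w ⟨0, by omega⟩)
  else if h : i.val = N then
    (N : ℝ) ^ 2 * (w ⟨N - 1, by omega⟩ - w ⟨N, by omega⟩)
  else
    (N : ℝ) ^ 2 *
      (w ⟨i.val + 1, by have := i.isLt; omega⟩ - 2 * w i + w ⟨i.val - 1, by omega⟩)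

open Set Filter Metric Topology
open scoped NNReal

lemma locLip_icc {f : ℝ → ℝ} (hf : LocallyLipschitz f) (a b : ℝ) :
    ∃ K : ℝ≥0, LipschitzOnWith K f (Icc a b) := by
  rcases le_or_gt b a with hba | hab
  · refine ⟨0, LipschitzOnWith.of_dist_le_mul fun x hx y hy => ?_⟩
    have hx' : x = a := le_antisymm (hx.2.trans hba) hx.1
    have hy' : y = a := le_antisymm (hy.2.trans hba) hy.1
    simp [hx', hy']
  · set S : Set ℝ := {x | x ∈ Icc a b ∧ ∃ K : ℝ≥0, LipschitzOnWith K f (Icc a x)} with hS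
    have haS : a ∈ S := by
      refine ⟨⟨le_refl a, hab.le⟩, 0, LipschitzOnWith.of_dist_le_mul fun x hx y hy => ?_⟩
      have : x = y := le_antisymm (hx.2.trans hy.1) (hy.2.trans hx.1)
      simp [this]
    have hbdd : BddAbove S := ⟨b, fun x hx => hx.1.2⟩
    set c := sSup S with hc
    have hac : a ≤ c := le_csSup hbdd haS
    have hcb : c ≤ b := csSup_le ⟨a, haS⟩ fun x hx => hx.1.2
    obtain ⟨K', t, ht, hK'⟩ := hf c
    obtain ⟨ε, hε, hball⟩ := Metric.mem_nhds_iff.mp ht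
    obtain ⟨x, hxS, hx⟩ := exists_lt_of_lt_csSup ⟨a, haS⟩ (show c - ε/4 < c by linarith)
    have hxc : x ≤ c := le_csSup hbdd hxS
    obtain ⟨K, hK⟩ := hxS.2
    have hax : a ≤ x := hxS.1.1
    set d := min b (c + ε/2) with hd
    have hcd : c ≤ d := le_min hcb (by linarith)
    have hsub : Icc x d ⊆ ball c ε := by
      intro y hy
      rw [mem_ball, Real.dist_eq, abs_lt]
      have h1 : y ≤ c + ε/2 := hy.2.trans (min_le_right _ _)
      have h2 : c - ε/4 < y := hx.trans_le hy.1
      constructor <;> linarith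
    have hdS : d ∈ S := by
      refine ⟨⟨hac.trans hcd, min_le_left _ _⟩,
        K ⊔ K', LipschitzOnWith.of_dist_le_mul fun u hu v hv => ?_⟩
      have key : ∀ u v : ℝ, u ∈ Icc a d → v ∈ Icc a d → u ≤ v →
          dist (f u) (f v) ≤ (K ⊔ K' : ℝ≥0) * dist u v := by
        intro u v hu hv huv
        have hKK : (K : ℝ) ≤ (K ⊔ K' : ℝ≥0) := by
          exact_mod_cast le_max_left K K'
        have hKK' : (K' : ℝ) ≤ (K ⊔ K' : ℝ≥0) := by
          exact_mod_cast le_max_right K K'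
        have hduv : dist u v = v - u := by
          rw [Real.dist_eq, abs_of_nonpos (by linarith)]; ring
        rcases le_total v x with hvx | hxv
        · have := hK.dist_le_mul u ⟨hu.1, huv.trans hvx⟩ v ⟨hv.1, hvx⟩
          exact this.trans (by nlinarith [dist_nonneg (x := u) (y := v)])
        · rcases le_total u x with hux | hxu
          · have hfx1 := hK.dist_le_mul u ⟨hu.1, hux⟩ x ⟨hax, le_refl x⟩
            have hfx2 := hK'.dist_le_mul x (hball (hsub ⟨le_refl x, hxv.trans hv.2⟩))
              v (hball (hsub ⟨hxv, hv.2⟩))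
            have htri := dist_triangle (f u) (f x) (f v)
            have hd1 : dist u x = x - u := by
              rw [Real.dist_eq, abs_of_nonpos (by linarith)]; ring
            have hd2 : dist x v = v - x := by
              rw [Real.dist_eq, abs_of_nonpos (by linarith)]; ring
            rw [hd1] at hfx1; rw [hd2] at hfx2
            rw [hduv]
            nlinarith
          · have := hK'.dist_le_mul u (hball (hsub ⟨hxu, hu.2⟩)) v (hball (hsub ⟨hxu.trans huv, hv.2⟩))
            exact this.trans (by nlinarith [dist_nonneg (x := u) (y := v)])
      rcases le_total u v with huv | hvu
      · exact key u v hu hv huv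
      · rw [dist_comm, dist_comm u v]; exact key v u hv hu hvu
    have hdc : d ≤ c := le_csSup hbdd hdS
    have hcb' : c = b := by
      by_contra hne
      have : c < b := lt_of_le_of_ne hcb hne
      have : c < d := lt_min this (by linarith)
      linarith
    have : d = b := by rw [hd, hcb']; exact min_eq_left (by linarith)
    obtain ⟨Kf, hKf⟩ := hdS.2
    exact ⟨Kf, this ▸ hKf⟩

lemma lapN_sub (N : ℕ) (w w' : Fin (N+1) → ℝ) (i : Fin (N+1)) :
    lapN N w i - lapN N w' i = lapN N (w - w') i := by
  simp only [lapN, Pi.sub_apply]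
  split_ifs <;> ring

lemma lapN_abs (N : ℕ) (w : Fin (N+1) → ℝ) (i : Fin (N+1)) :
    |lapN N w i| ≤ 4 * (N:ℝ)^2 * ‖w‖ := by
  have h4 : ∀ j, |w j| ≤ ‖w‖ := fun j => by
    simpa [Real.norm_eq_abs] using norm_le_pi_norm w j
  have hN2 : (0:ℝ) ≤ (N:ℝ)^2 := by positivity
  simp only [lapN]
  split_ifs
  · refine abs_le.mpr ⟨?_, ?_⟩ <;>
      nlinarith [abs_le.mp (h4 ⟨min 1 N, by omega⟩), abs_le.mp (h4 ⟨0, by omega⟩)]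
  · refine abs_le.mpr ⟨?_, ?_⟩ <;>
      nlinarith [abs_le.mp (h4 ⟨N - 1, by omega⟩), abs_le.mp (h4 ⟨N, by omega⟩)]
  · refine abs_le.mpr ⟨?_, ?_⟩ <;>
      nlinarith [abs_le.mp (h4 ⟨i.val + 1, by have := i.isLt; omega⟩),
        abs_le.mp (h4 ⟨i.val - 1, by omega⟩), abs_le.mp (h4 i)]

lemma lapN_norm (N : ℕ) (w : Fin (N+1) → ℝ) : ‖lapN N w‖ ≤ 4 * (N:ℝ)^2 * ‖w‖ := by
  refine (pi_norm_le_iff_of_nonneg (by positivity)).mpr fun i => ?_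
  simpa [Real.norm_eq_abs] using lapN_abs N w i

lemma lapN_nonpos (N : ℕ) (w : Fin (N+1) → ℝ) (i : Fin (N+1)) (h : ∀ j, w j ≤ w i) :
    lapN N w i ≤ 0 := by
  have hN2 : (0:ℝ) ≤ (N:ℝ)^2 := by positivity
  simp only [lapN]
  split_ifs with h0 hN
  · have e1 : w ⟨0, by omega⟩ = w i := by congr 1; exact Fin.ext h0.symm
    rw [e1]
    nlinarith [h ⟨min 1 N, by omega⟩]
  · have e1 : w ⟨N, by omega⟩ = w i := by congr 1; exact Fin.ext hN.symm
    rw [e1]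
    nlinarith [h ⟨N - 1, by omega⟩]
  · nlinarith [h ⟨i.val + 1, by have := i.isLt; omega⟩, h ⟨i.val - 1, by omega⟩]

lemma lapN_nonneg (N : ℕ) (w : Fin (N+1) → ℝ) (i : Fin (N+1)) (h : ∀ j, w i ≤ w j) :
    0 ≤ lapN N w i := by
  have := lapN_nonpos N (-w) i (fun j => by simpa using h j)
  have e : lapN N (-w) i = - lapN N w i := by
    simp only [lapN, Pi.neg_apply]; split_ifs <;> ring
  rw [e] at this; linarith

lemma lapN_comp_lip {K : ℝ≥0} {g : ℝ → ℝ} {s : Set ℝ} (hg : LipschitzOnWith K g s)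
    (N : ℕ) (x y : Fin (N+1) → ℝ) (hx : ∀ i, x i ∈ s) (hy : ∀ i, y i ∈ s) :
    ‖lapN N (fun i => g (x i)) - lapN N (fun i => g (y i))‖ ≤ 4 * (N:ℝ)^2 * K * ‖x - y‖ := by
  have e : lapN N (fun i => g (x i)) - lapN N (fun i => g (y i))
      = lapN N ((fun i => g (x i)) - (fun i => g (y i))) := by
    funext i; exact lapN_sub N _ _ i
  rw [e]
  calc ‖lapN N ((fun i => g (x i)) - (fun i => g (y i)))‖
      ≤ 4 * (N:ℝ)^2 * ‖(fun i => g (x i)) - (fun i => g (y i))‖ := lapN_norm N _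
    _ ≤ 4 * (N:ℝ)^2 * ((K:ℝ) * ‖x - y‖) := by
        refine mul_le_mul_of_nonneg_left ?_ (by positivity)
        refine (pi_norm_le_iff_of_nonneg (by positivity)).mpr fun i => ?_
        have h1 := hg.dist_le_mul (x i) (hx i) (y i) (hy i)
        have h2 : dist (x i) (y i) ≤ ‖x - y‖ := by
          simpa [Real.dist_eq, Real.norm_eq_abs] using norm_le_pi_norm (x - y) i
        simp only [Pi.sub_apply, Real.norm_eq_abs, ← Real.dist_eq]
        calc dist (g (x i)) (g (y i)) ≤ K * dist (x i) (y i) := h1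
          _ ≤ K * ‖x - y‖ := by
              exact mul_le_mul_of_nonneg_left h2 (by positivity)
    _ = 4 * (N:ℝ)^2 * K * ‖x - y‖ := by ring

lemma invariant_box (M : ℝ) (N : ℕ) (ψ : ℝ → ℝ)
    (htop : ∀ y z : ℝ, M ≤ z → ψ y ≤ ψ z) (hbot : ∀ y z : ℝ, z ≤ 0 → ψ z ≤ ψ y)
    (u : ℝ → Fin (N+1) → ℝ)
    (hu : ∀ t ∈ Ici (0:ℝ), HasDerivWithinAt u (lapN N fun i => ψ (u t i)) (Ici 0) t)
    (h0 : ∀ i, 0 ≤ u 0 i ∧ u 0 i ≤ M) :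
    ∀ t ∈ Ici (0:ℝ), ∀ i, 0 ≤ u t i ∧ u t i ≤ M := by
  classical
  set ι := Option (Fin (N+1) × Bool) with hι
  set g : ι → ℝ → ℝ := fun j s =>
    match j with
    | none => 0
    | some (i, true) => u s i - M
    | some (i, false) => -(u s i) with hg
  set dv : ι → ℝ → ℝ := fun j s =>
    match j with
    | none => 0
    | some (i, true) => lapN N (fun k => ψ (u s k)) i
    | some (i, false) => -(lapN N (fun k => ψ (u s k)) i) with hdv
  set h : ℝ → ℝ := fun s => Finset.univ.sup' Finset.univ_nonempty (fun j => g j s) with hh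
  have hg0 : ∀ s j, g j s ≤ h s := fun s j => Finset.le_sup' (fun j => g j s) (Finset.mem_univ j)
  have hh0 : ∀ s, 0 ≤ h s := fun s => hg0 s none
  -- coordinate derivatives
  have hcoord : ∀ t, 0 ≤ t → ∀ i, HasDerivWithinAt (fun s => u s i)
      ((lapN N fun k => ψ (u t k)) i) (Ici 0) t := by
    intro t ht i
    exact hasDerivWithinAt_pi.mp (hu t ht) i
  have gder : ∀ j, ∀ t, 0 ≤ t → HasDerivWithinAt (g j) (dv j t) (Ici 0) t := by
    intro j t ht
    match j with
    | none => exact hasDerivWithinAt_const _ _ 0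
    | some (i, true) => exact (hcoord t ht i).sub_const M
    | some (i, false) => exact (hcoord t ht i).neg
  have gcont : ∀ j, ContinuousOn (g j) (Ici 0) :=
    fun j s hs => ((gder j s hs).continuousWithinAt)
  have hcont : ContinuousOn h (Ici 0) := by
    intro s hs
    exact Filter.Tendsto.finset_sup'_nhds_apply Finset.univ_nonempty
      (fun j _ => (gcont j s hs : Tendsto (g j) (𝓝[Ici 0] s) (𝓝 (g j s))))
  -- key sign condition
  have sign : ∀ t, 0 ≤ t → ∀ j, g j t = h t → dv j t ≤ 0 := by
    intro t ht j hact
    match j with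
    | none => exact le_refl _
    | some (i, true) =>
      have hi : M ≤ u t i := by
        have h1 : u t i - M = h t := hact
        have := hh0 t
        linarith
      exact lapN_nonpos N _ i (fun k => htop (u t k) (u t i) hi)
    | some (i, false) =>
      have hi : u t i ≤ 0 := by
        have h1 : -(u t i) = h t := hact
        have := hh0 t
        linarith
      have := lapN_nonneg N (fun k => ψ (u t k)) i (fun k => hbot (u t k) (u t i) hi)
      show -(lapN N (fun k => ψ (u t k)) i) ≤ 0
      linarith
  -- Gronwall
  intro T hT
  have main : ∀ s ∈ Icc (0:ℝ) T, h s ≤ gronwallBound 0 0 0 (s - 0) := by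
    refine le_gronwallBound_of_liminf_deriv_right_le (f' := fun _ => (0:ℝ))
      (δ := 0) (K := 0) (ε := 0) (hcont.mono (Icc_subset_Ici_self)) ?_ ?_ ?_
    · intro x hx r hr
      have hx0 : (0:ℝ) ≤ x := hx.1
      have key : ∀ j, ∀ᶠ z in 𝓝[>] x, g j z < h x + r * (z - x) := by
        intro j
        by_cases hact : g j x = h x
        · have hder : HasDerivWithinAt (g j) (dv j x) (Ici x) x :=
            (gder j x hx0).mono (Ici_subset_Ici.mpr hx0)
          have hsign : dv j x ≤ 0 := sign x hx0 j hact
          have hslope := hasDerivWithinAt_iff_tendsto_slope.mp hder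
          rw [Ici_sdiff_left] at hslope
          have h2 : ∀ᶠ z in 𝓝[>] x, slope (g j) x z < r :=
            hslope.eventually (gt_mem_nhds (hsign.trans_lt hr))
          filter_upwards [h2, self_mem_nhdsWithin] with z hz hz'
          have hzx : 0 < z - x := sub_pos.mpr hz'
          rw [slope_def_field] at hz
          have := (div_lt_iff₀ hzx).mp hz
          rw [hact] at this
          linarith
        · have hlt : g j x < h x := lt_of_le_of_ne (hg0 x j) hact
          have hcw : ContinuousWithinAt (g j) (Ioi x) x :=
            (gcont j x hx0).mono (fun z hz => le_trans hx0 (le_of_lt hz))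
          have h2 : ∀ᶠ z in 𝓝[>] x, g j z < h x := hcw.eventually (gt_mem_nhds hlt)
          filter_upwards [h2, self_mem_nhdsWithin] with z hz hz'
          have hr' : (0:ℝ) < r := hr
          have := mul_pos hr' (sub_pos.mpr (hz' : x < z))
          linarith
      have hall : ∀ᶠ z in 𝓝[>] x, ∀ j, g j z < h x + r * (z - x) := eventually_all.mpr key
      refine (?_ : ∀ᶠ z in 𝓝[>] x, (z - x)⁻¹ * (h z - h x) < r).frequently
      filter_upwards [hall, self_mem_nhdsWithin] with z hz hz'
      have hzx : 0 < z - x := sub_pos.mpr hz'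
      have hzlt : h z < h x + r * (z - x) :=
        (Finset.sup'_lt_iff Finset.univ_nonempty).mpr fun j _ => hz j
      calc (z - x)⁻¹ * (h z - h x) < (z - x)⁻¹ * (r * (z - x)) := by
            apply mul_lt_mul_of_pos_left _ (inv_pos.mpr hzx); linarith
        _ = r := by field_simp
    · refine Finset.sup'_le _ _ fun j _ => ?_
      match j with
      | none => exact le_refl _
      | some (i, true) =>
        have := (h0 i).2
        show u 0 i - M ≤ 0
        linarith
      | some (i, false) =>
        have := (h0 i).1
        show -(u 0 i) ≤ 0
        linarith
    · intro x _
      simp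
  have hTle : h T ≤ 0 := by
    have := main T ⟨hT, le_refl T⟩
    simpa [gronwallBound] using this
  intro i
  constructor
  · have := hg0 T (some (i, false))
    have h1 : g (some (i, false)) T = -(u T i) := rfl
    rw [h1] at this
    linarith
  · have := hg0 T (some (i, true))
    have h1 : g (some (i, true)) T = u T i - M := rfl
    rw [h1] at this
    linarith

lemma global_sol {E : Type*} [NormedAddCommGroup E] [NormedSpace ℝ E] [CompleteSpace E]
    (G : E → E) (L : ℝ≥0) (C : ℝ)
    (hGlip : LipschitzWith L G) (hGb : ∀ x, ‖G x‖ ≤ C) (u₀ : E) :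
    ∃ u : ℝ → E, u 0 = u₀ ∧ ∀ t ∈ Ici (0:ℝ), HasDerivWithinAt u (G (u t)) (Ici 0) t := by
  have hC0 : 0 ≤ C := le_trans (norm_nonneg _) (hGb u₀)
  have hex : ∀ n : ℕ, ∃ f : ℝ → E, f 0 = u₀ ∧ ∀ t ∈ Icc (0:ℝ) ((n:ℝ)+1),
      HasDerivWithinAt f (G (f t)) (Icc 0 ((n:ℝ)+1)) t := by
    intro n
    have hpl : IsPicardLindelof (fun _ x => G x) (tmin := 0) (tmax := (n:ℝ)+1)
        ⟨0, le_refl 0, by positivity⟩ u₀ ⟨C*((n:ℝ)+1), by positivity⟩ 0 ⟨C, hC0⟩ L :=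
      IsPicardLindelof.of_time_independent (fun x _ => hGb x) hGlip.lipschitzOnWith (by
        show C * max (((n:ℝ)+1) - 0) (0 - 0) ≤ C*((n:ℝ)+1) - 0
        simp only [sub_zero]
        rw [max_eq_left (by positivity)])
    exact hpl.exists_eq_forall_mem_Icc_hasDerivWithinAt₀
  choose sol hsol0 hsolD using hex
  have hsolC : ∀ n : ℕ, ContinuousOn (sol n) (Icc (0:ℝ) ((n:ℝ)+1)) :=
    fun n t ht => (hsolD n t ht).continuousWithinAt
  have hsolD' : ∀ n : ℕ, ∀ t ∈ Ico (0:ℝ) ((n:ℝ)+1),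
      HasDerivWithinAt (sol n) (G (sol n t)) (Ici t) t := by
    intro n t ht
    refine (hsolD n t (Ico_subset_Icc_self ht)).mono_of_mem_nhdsWithin ?_
    exact mem_of_superset (Icc_mem_nhdsGE_of_mem ⟨le_refl t, ht.2⟩)
      (Icc_subset_Icc_left ht.1)
  have agree : ∀ m n : ℕ, ∀ t ∈ Icc (0:ℝ) (min ((m:ℝ)+1) ((n:ℝ)+1)), sol m t = sol n t := by
    intro m n
    refine ODE_solution_unique (v := fun _ x => G x) (K := L) (fun _ => hGlip)
      ((hsolC m).mono (Icc_subset_Icc_right (min_le_left _ _)))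
      (fun t ht => hsolD' m t ⟨ht.1, lt_of_lt_of_le ht.2 (min_le_left _ _)⟩)
      ((hsolC n).mono (Icc_subset_Icc_right (min_le_right _ _)))
      (fun t ht => hsolD' n t ⟨ht.1, lt_of_lt_of_le ht.2 (min_le_right _ _)⟩)
      ((hsol0 m).trans (hsol0 n).symm)
  set u : ℝ → E := fun t => sol ⌈t⌉₊ t with hudef
  have hu_eq : ∀ n : ℕ, ∀ t ∈ Icc (0:ℝ) ((n:ℝ)+1), u t = sol n t := by
    intro n t ht
    refine agree ⌈t⌉₊ n t ⟨ht.1, le_min ?_ ht.2⟩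
    have := Nat.le_ceil t
    linarith
  refine ⟨u, ?_, ?_⟩
  · have : u 0 = sol 0 0 := by
      refine hu_eq 0 0 ⟨le_refl 0, by norm_num⟩
    rw [this, hsol0 0]
  · intro t ht
    set n := ⌈t⌉₊ with hn
    have htn : t < (n:ℝ)+1 := lt_of_le_of_lt (Nat.le_ceil t) (by linarith)
    have hmem : Icc (0:ℝ) ((n:ℝ)+1) ∈ 𝓝[Ici 0] t := by
      refine mem_nhdsWithin.mpr ⟨Iio ((n:ℝ)+1), isOpen_Iio, htn, ?_⟩
      intro z hz
      exact ⟨hz.2, le_of_lt hz.1⟩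
    have hD := (hsolD n t ⟨ht, htn.le⟩).mono_of_mem_nhdsWithin hmem
    have heq : u =ᶠ[𝓝[Ici 0] t] sol n := eventually_of_mem hmem (fun z hz => hu_eq n z hz)
    have hut : u t = sol n t := hu_eq n t ⟨ht, htn.le⟩
    rw [show G (u t) = G (sol n t) by rw [hut]]
    exact hD.congr_of_eventuallyEq heq hut

lemma unique_sol {E : Type*} [NormedAddCommGroup E] [NormedSpace ℝ E]
    (F : E → E)
    (hF : ∀ R : ℝ, 0 ≤ R → ∃ L : ℝ≥0, LipschitzOnWith L F (closedBall 0 R))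
    (u v : ℝ → E) (huv0 : u 0 = v 0)
    (hu : ∀ t ∈ Ici (0:ℝ), HasDerivWithinAt u (F (u t)) (Ici 0) t)
    (hv : ∀ t ∈ Ici (0:ℝ), HasDerivWithinAt v (F (v t)) (Ici 0) t) :
    ∀ t ∈ Ici (0:ℝ), u t = v t := by
  intro T hT
  have hcu : ContinuousOn u (Icc 0 T) :=
    fun s hs => ((hu s hs.1).continuousWithinAt).mono (fun z hz => hz.1)
  have hcv : ContinuousOn v (Icc 0 T) :=
    fun s hs => ((hv s hs.1).continuousWithinAt).mono (fun z hz => hz.1)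
  obtain ⟨Ru, hRu⟩ := isCompact_Icc.exists_bound_of_continuousOn hcu
  obtain ⟨Rv, hRv⟩ := isCompact_Icc.exists_bound_of_continuousOn hcv
  set R : ℝ := max 0 (max Ru Rv) with hR
  have hR0 : 0 ≤ R := le_max_left _ _
  obtain ⟨L, hL⟩ := hF R hR0
  have key : EqOn u v (Icc 0 T) := by
    refine ODE_solution_unique_of_mem_Icc_right (v := fun _ x => F x)
      (s := fun _ => closedBall 0 R) (fun _ _ => hL) hcu
      (fun t ht => (hu t ht.1).mono (Ici_subset_Ici.mpr ht.1))
      (fun t ht => ?_) hcv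
      (fun t ht => (hv t ht.1).mono (Ici_subset_Ici.mpr ht.1))
      (fun t ht => ?_) huv0
    · rw [mem_closedBall_zero_iff]
      exact (hRu t (Ico_subset_Icc_self ht)).trans ((le_max_left _ _).trans (le_max_right _ _))
    · rw [mem_closedBall_zero_iff]
      exact (hRv t (Ico_subset_Icc_self ht)).trans ((le_max_right _ _).trans (le_max_right _ _))
  exact key ⟨hT, le_refl T⟩

/-- global existence and uniqueness on `[0,∞)` for the grid system
`u' = Δ_N(φ∘u)` with initial data in the invariant box `[0,M]^{N+1}`. -/
theorem stmt8 (M : ℝ) (hM : 0 < M) (φ : ℝ → ℝ) (hφ : LocallyLipschitz φ)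
    (hφ0 : φ 0 = 0) (hφpos : ∀ y ∈ Set.Icc (0 : ℝ) M, 0 ≤ φ y)
    (hφmax : ∀ y ∈ Set.Icc (0 : ℝ) M, φ y ≤ φ M)
    (N : ℕ) (hN : 1 ≤ N) (u₀ : Fin (N + 1) → ℝ)
    (h0 : ∀ i, 0 ≤ u₀ i ∧ u₀ i ≤ M) :
    (∃ u : ℝ → Fin (N + 1) → ℝ, u 0 = u₀ ∧
      ∀ t ∈ Set.Ici (0 : ℝ),
        HasDerivWithinAt u (lapN N fun i => φ (u t i)) (Set.Ici 0) t) ∧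
    ∀ u v : ℝ → Fin (N + 1) → ℝ,
      u 0 = u₀ →
      (∀ t ∈ Set.Ici (0 : ℝ),
        HasDerivWithinAt u (lapN N fun i => φ (u t i)) (Set.Ici 0) t) →
      v 0 = u₀ →
      (∀ t ∈ Set.Ici (0 : ℝ),
        HasDerivWithinAt v (lapN N fun i => φ (v t i)) (Set.Ici 0) t) →
      ∀ t ∈ Set.Ici (0 : ℝ), u t = v t := by
  have hM0 : (0:ℝ) ≤ M := hM.le
  constructor
  · -- existence
    set clamp : ℝ → ℝ := fun y => max 0 (min y M) with hclampdef
    have hclamp_mem : ∀ y, clamp y ∈ Icc 0 M :=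
      fun y => ⟨le_max_left _ _, max_le hM0 (min_le_right _ _)⟩
    have hclamp_id : ∀ y ∈ Icc (0:ℝ) M, clamp y = y := by
      intro y hy
      rw [hclampdef]
      simp only
      rw [min_eq_left hy.2, max_eq_right hy.1]
    set ψ : ℝ → ℝ := fun y => φ (clamp y) with hψdef
    obtain ⟨K, hK⟩ := locLip_icc hφ 0 M
    have hclampL : LipschitzWith 1 clamp := (LipschitzWith.id.min_const M).const_max 0
    have hψlip : LipschitzWith K ψ := by
      refine LipschitzWith.of_dist_le_mul fun x y => ?_
      calc dist (ψ x) (ψ y) ≤ K * dist (clamp x) (clamp y) :=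
            hK.dist_le_mul _ (hclamp_mem x) _ (hclamp_mem y)
        _ ≤ K * dist x y := by
            refine mul_le_mul_of_nonneg_left ?_ K.coe_nonneg
            simpa using hclampL.dist_le_mul x y
    have hψid : ∀ y ∈ Icc (0:ℝ) M, ψ y = φ y := fun y hy => by
      rw [hψdef]; simp only; rw [hclamp_id y hy]
    have hψ_nonneg : ∀ y, 0 ≤ ψ y := fun y => hφpos _ (hclamp_mem y)
    have hψ_le : ∀ y, ψ y ≤ φ M := fun y => hφmax _ (hclamp_mem y)
    have htop : ∀ y z : ℝ, M ≤ z → ψ y ≤ ψ z := by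
      intro y z hz
      have hcz : clamp z = M := by
        rw [hclampdef]; simp only
        rw [min_eq_right hz, max_eq_right hM0]
      have : ψ z = φ M := by rw [hψdef]; simp only; rw [hcz]
      rw [this]; exact hψ_le y
    have hbot : ∀ y z : ℝ, z ≤ 0 → ψ z ≤ ψ y := by
      intro y z hz
      have hcz : clamp z = 0 := by
        rw [hclampdef]; simp only
        rw [min_eq_left (hz.trans hM0), max_eq_left hz]
      have : ψ z = 0 := by rw [hψdef]; simp only; rw [hcz, hφ0]
      rw [this]; exact hψ_nonneg y
    set G : (Fin (N+1) → ℝ) → (Fin (N+1) → ℝ) := fun x => lapN N (fun i => ψ (x i)) with hGdef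
    set L : ℝ≥0 := 4 * (N:ℝ≥0)^2 * K with hLdef
    have hLcoe : (L:ℝ) = 4 * (N:ℝ)^2 * (K:ℝ) := by rw [hLdef]; push_cast; ring
    have hGlip : LipschitzWith L G := by
      refine LipschitzWith.of_dist_le_mul fun x y => ?_
      rw [dist_eq_norm, dist_eq_norm, hLcoe]
      exact lapN_comp_lip (hψlip.lipschitzOnWith (s := univ)) N x y
        (fun i => mem_univ _) (fun i => mem_univ _)
    have hGb : ∀ x, ‖G x‖ ≤ 4*(N:ℝ)^2 * φ M := by
      intro x
      refine (lapN_norm N _).trans ?_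
      have hb : ‖fun i => ψ (x i)‖ ≤ φ M := by
        refine (pi_norm_le_iff_of_nonneg (hφpos M ⟨hM0, le_refl M⟩)).mpr fun i => ?_
        rw [Real.norm_eq_abs, abs_of_nonneg (hψ_nonneg _)]
        exact hψ_le _
      exact mul_le_mul_of_nonneg_left hb (by positivity)
    obtain ⟨u, hu0, huD⟩ := global_sol G L _ hGlip hGb u₀
    have hbox : ∀ t ∈ Ici (0:ℝ), ∀ i, 0 ≤ u t i ∧ u t i ≤ M := by
      refine invariant_box M N ψ htop hbot u huD ?_
      rw [hu0]; exact h0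
    refine ⟨u, hu0, fun t ht => ?_⟩
    have heq : (fun i => φ (u t i)) = (fun i => ψ (u t i)) :=
      funext fun i => (hψid _ ⟨(hbox t ht i).1, (hbox t ht i).2⟩).symm
    rw [show (lapN N fun i => φ (u t i)) = G (u t) from congrArg (lapN N) heq]
    exact huD t ht
  · -- uniqueness
    intro u v hu0 huD hv0 hvD
    set F : (Fin (N+1) → ℝ) → (Fin (N+1) → ℝ) := fun x => lapN N (fun i => φ (x i)) with hFdef
    have hF : ∀ R : ℝ, 0 ≤ R → ∃ L' : ℝ≥0, LipschitzOnWith L' F (closedBall 0 R) := by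
      intro R hR
      obtain ⟨K₂, hK₂⟩ := locLip_icc hφ (-R) R
      refine ⟨4 * (N:ℝ≥0)^2 * K₂, LipschitzOnWith.of_dist_le_mul fun x hx y hy => ?_⟩
      rw [dist_eq_norm, dist_eq_norm]
      have hcoords : ∀ (w : Fin (N+1) → ℝ), w ∈ closedBall (0:Fin (N+1) → ℝ) R →
          ∀ i, w i ∈ Icc (-R) R := by
        intro w hw i
        rw [mem_closedBall_zero_iff] at hw
        have h1 : ‖w i‖ ≤ ‖w‖ := norm_le_pi_norm w i
        rw [Real.norm_eq_abs] at h1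
        exact abs_le.mp (h1.trans hw)
      have hmain := lapN_comp_lip hK₂ N x y (hcoords x hx) (hcoords y hy)
      refine hmain.trans (le_of_eq ?_)
      push_cast
      ring
    exact fun t ht => unique_sol F hF u v (hu0.trans hv0.symm) huD hvD t ht
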